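/- arXiv:1304.5822 — 6 statements merged into one kernel-verified Lean document; each statement's English description precedes it below -/
import Mathlib

section
/- Every path bargaining instance admits a fixed point: there exists a share vector x = (x_1,…,x_n) ∈ [0,1]^n (with the convention x_{n+1} = 0 and w_i = d_0·∏_{j=1}^{i} x_j) satisfying (1 − x_i)·w_{i−1} = (1 − x_{i+1})·(x_i·w_{i−1} − d_i) for every i = 1,…,n. -/
/-- `pathW d x i` is the value `w_i = d_0 · ∏_{j=1}^{i} x_j` reaching node `i`
in a path bargaining instance with values `d` and shares `x`. -/
noncomputable def pathW (d x : ℕ → ℝ) (i : ℕ) : ℝ :=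
  d 0 * ∏ j ∈ Finset.Icc 1 i, x j

/-- A share vector: `x_i ∈ [0,1]` for `i = 1,…,n`. -/
def IsShareVector (n : ℕ) (x : ℕ → ℝ) : Prop :=
  ∀ i, 1 ≤ i → i ≤ n → 0 ≤ x i ∧ x i ≤ 1

/-- A fixed point of the path bargaining equations
`(1 − x_i)·w_{i−1} = (1 − x_{i+1})·(x_i·w_{i−1} − d_i)` for `i = 1,…,n`,
with the convention `x_{n+1} = 0`. -/
def IsPathFixedPoint (n : ℕ) (d x : ℕ → ℝ) : Prop :=
  IsShareVector n x ∧
  ∀ i, 1 ≤ i → i ≤ n →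
    (1 - x i) * pathW d x (i - 1) =
      (1 - (if i = n then 0 else x (i + 1))) * (x i * pathW d x (i - 1) - d i)

noncomputable def vp (d : ℕ → ℝ) (n : ℕ) (t : ℝ) : ℕ → ℝ × ℝ
  | 0 => (0, t)
  | k + 1 =>
      ((vp d n t k).2,
        (vp d n t k).2 +
          ((vp d n t k).2 - (vp d n t k).1) *
            max 0 (((vp d n t k).2 - d (n - k)) / (vp d n t k).2))

lemma vp_bounds {d : ℕ → ℝ} {n : ℕ} {t : ℝ} (ht : 0 < t)
    (hd : ∀ i, i ≤ n → 0 ≤ d i) (k : ℕ) :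
    (vp d n t k).1 ≤ (vp d n t k).2 ∧ (vp d n t k).2 - (vp d n t k).1 ≤ t ∧
      0 ≤ (vp d n t k).1 ∧ t ≤ (vp d n t k).2 := by
  induction k with
  | zero =>
      refine ⟨ht.le, ?_, le_refl (0:ℝ), le_refl t⟩
      simp [vp]
  | succ k ih =>
    obtain ⟨h1, h2, h3, h4⟩ := ih
    have hb : 0 < (vp d n t k).2 := lt_of_lt_of_le ht h4
    have hc0 : 0 ≤ max 0 (((vp d n t k).2 - d (n - k)) / (vp d n t k).2) := le_max_left _ _
    have hc1 : max 0 (((vp d n t k).2 - d (n - k)) / (vp d n t k).2) ≤ 1 := by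
      apply max_le (by norm_num)
      rw [div_le_one hb]
      have := hd (n - k) (by omega)
      linarith
    simp only [vp]
    refine ⟨by nlinarith, by nlinarith, by linarith, by nlinarith⟩

lemma vp_le {d : ℕ → ℝ} {n : ℕ} {t : ℝ} (ht : 0 < t)
    (hd : ∀ i, i ≤ n → 0 ≤ d i) (k : ℕ) :
    (vp d n t k).2 ≤ (k + 1) * t := by
  induction k with
  | zero => simp [vp]
  | succ k ih =>
    obtain ⟨h1, h2, h3, h4⟩ := vp_bounds ht hd k
    have hb : 0 < (vp d n t k).2 := lt_of_lt_of_le ht h4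
    have hc0 : 0 ≤ max 0 (((vp d n t k).2 - d (n - k)) / (vp d n t k).2) := le_max_left _ _
    have hc1 : max 0 (((vp d n t k).2 - d (n - k)) / (vp d n t k).2) ≤ 1 := by
      apply max_le (by norm_num)
      rw [div_le_one hb]
      have := hd (n - k) (by omega)
      linarith
    simp only [vp]
    push_cast
    nlinarith

lemma vp_cont (d : ℕ → ℝ) (n : ℕ) (hd : ∀ i, i ≤ n → 0 ≤ d i) (k : ℕ) :
    ContinuousOn (fun t => (vp d n t k).1) (Set.Ioi 0) ∧
      ContinuousOn (fun t => (vp d n t k).2) (Set.Ioi 0) := by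
  induction k with
  | zero => exact ⟨continuousOn_const, continuousOn_id⟩
  | succ k ih =>
    obtain ⟨ih1, ih2⟩ := ih
    have hne : ∀ t ∈ Set.Ioi (0:ℝ), (vp d n t k).2 ≠ 0 := fun t ht =>
      ne_of_gt (lt_of_lt_of_le ht (vp_bounds ht hd k).2.2.2)
    constructor
    · simpa only [vp] using ih2
    · simp only [vp]
      exact ih2.add ((ih2.sub ih1).mul
        (continuousOn_const.sup ((ih2.sub continuousOn_const).div ih2 hne)))


/-- Every path bargaining instance admits a fixed point. -/
theorem path_fixed_point_exists (n : ℕ) (hn : 1 ≤ n) (d : ℕ → ℝ)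
    (hd0 : 0 < d 0) (hd : ∀ i, 1 ≤ i → i ≤ n → 0 ≤ d i ∧ d i < d 0) :
    ∃ x : ℕ → ℝ, IsPathFixedPoint n d x := by
  have hdnn : ∀ i, i ≤ n → 0 ≤ d i := by
    intro i hi
    rcases Nat.eq_zero_or_pos i with h | h
    · simpa [h] using hd0.le
    · exact (hd i h hi).1
  -- find t with (vp d n t n).2 = d 0 by IVT
  set ε : ℝ := d 0 / (n + 2) with hεdef
  have hεpos : 0 < ε := by positivity
  have hεle : ε ≤ d 0 := by
    rw [hεdef, div_le_iff₀ (by positivity)]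
    nlinarith [hd0, Nat.cast_nonneg (α := ℝ) n]
  have hcont : ContinuousOn (fun t => (vp d n t n).2) (Set.Icc ε (d 0)) :=
    (vp_cont d n hdnn n).2.mono (fun t ht => lt_of_lt_of_le hεpos ht.1)
  have h1 : (vp d n ε n).2 ≤ (n + 1) * ε := vp_le hεpos hdnn n
  have h2 : (n + 1 : ℝ) * ε < d 0 := by
    rw [hεdef, ← mul_div_assoc, div_lt_iff₀ (by positivity)]
    nlinarith [hd0, Nat.cast_nonneg (α := ℝ) n]
  have h3 : d 0 ≤ (vp d n (d 0) n).2 := (vp_bounds hd0 hdnn n).2.2.2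
  obtain ⟨t, htmem, hft⟩ := intermediate_value_Icc hεle hcont
    (Set.mem_Icc.mpr ⟨le_of_lt (lt_of_le_of_lt h1 h2), h3⟩)
  have hft' : (vp d n t n).2 = d 0 := hft
  have htpos : 0 < t := lt_of_lt_of_le hεpos htmem.1
  -- stalling: once the two components agree, the sequence is constant
  have hstall : ∀ m, (vp d n t m).1 = (vp d n t m).2 →
      ∀ j, m ≤ j → (vp d n t j).1 = (vp d n t j).2 ∧ (vp d n t j).2 = (vp d n t m).2 := by
    intro m hm j hj
    induction j with
    | zero =>
        have : m = 0 := by omega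
        subst this
        exact ⟨hm, rfl⟩
    | succ j ih =>
        rcases Nat.lt_or_ge j (m) with h | h
        · have : m = j + 1 := by omega
          subst this
          exact ⟨hm, rfl⟩
        · obtain ⟨e1, e2⟩ := ih h
          constructor
          · simp only [vp]
            rw [e1]
            ring
          · simp only [vp]
            rw [e1, e2]
            ring
  -- strictness: the clamp is never active along the solution
  have hstrict : ∀ k, k < n → d (n - k) < (vp d n t k).2 := by
    intro k hk
    by_contra hle
    push_neg at hle
    have hb : 0 < (vp d n t k).2 := lt_of_lt_of_le htpos (vp_bounds htpos hdnn k).2.2.2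
    have hc : max 0 (((vp d n t k).2 - d (n - k)) / (vp d n t k).2) = 0 :=
      max_eq_left (div_nonpos_of_nonpos_of_nonneg (by linarith) hb.le)
    have heq : (vp d n t (k + 1)).1 = (vp d n t (k + 1)).2 := by
      simp only [vp, hc]
      ring
    have h5 : (vp d n t (k + 1)).2 = (vp d n t k).2 := by
      simp only [vp, hc]
      ring
    have h6 := (hstall (k + 1) heq n (by omega)).2
    have hlt : d (n - k) < d 0 := (hd (n - k) (by omega) (by omega)).2
    rw [hft', h5] at h6
    linarith
  -- the sequence v
  set v : ℕ → ℝ := fun j => (vp d n t j).1 with hvdef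
  have hv1 : ∀ j, v (j + 1) = (vp d n t j).2 := fun j => rfl
  have hv0 : v 0 = 0 := rfl
  have hvpos : ∀ j, 1 ≤ j → 0 < v j := by
    intro j hj
    obtain ⟨m, rfl⟩ : ∃ m, j = m + 1 := ⟨j - 1, by omega⟩
    rw [hv1]
    exact lt_of_lt_of_le htpos (vp_bounds htpos hdnn m).2.2.2
  have hmono : ∀ j, v j ≤ v (j + 1) := by
    intro j
    rw [hv1]
    exact (vp_bounds htpos hdnn j).1
  have hvtop : v (n + 1) = d 0 := by rw [hv1]; exact hft'
  -- exact recursion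
  have hrec : ∀ m, m < n →
      v (m + 2) = v (m + 1) + (v (m + 1) - v m) * ((v (m + 1) - d (n - m)) / v (m + 1)) := by
    intro m hm
    have hb : 0 < (vp d n t m).2 := lt_of_lt_of_le htpos (vp_bounds htpos hdnn m).2.2.2
    have hpos : 0 ≤ ((vp d n t m).2 - d (n - m)) / (vp d n t m).2 :=
      div_nonneg (by have := hstrict m hm; linarith) hb.le
    have : max 0 (((vp d n t m).2 - d (n - m)) / (vp d n t m).2)
        = ((vp d n t m).2 - d (n - m)) / (vp d n t m).2 := max_eq_right hpos
    rw [hv1 (m + 1), hv1 m]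
    show (vp d n t (m + 1)).2 = _
    simp only [vp, this]
    rfl
  -- the share vector
  set x : ℕ → ℝ := fun i => if 1 ≤ i ∧ i ≤ n then v (n + 1 - i) / v (n + 2 - i) else 0
    with hxdef
  have hxval : ∀ i, 1 ≤ i → i ≤ n → x i = v (n + 1 - i) / v (n + 2 - i) := by
    intro i h1 h2
    simp only [hxdef]
    rw [if_pos (show 1 ≤ i ∧ i ≤ n from ⟨h1, h2⟩)]
  have hW : ∀ i, i ≤ n → pathW d x i = v (n + 1 - i) := by
    intro i hi
    induction i with
    | zero =>
        simp only [pathW, Finset.Icc_self]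
        rw [show Finset.Icc 1 0 = ∅ by rfl]
        simpa using hvtop.symm
    | succ i ih =>
        have hi' : i ≤ n := by omega
        have step : pathW d x (i + 1) = pathW d x i * x (i + 1) := by
          unfold pathW
          rw [Finset.prod_Icc_succ_top (by omega : 1 ≤ i + 1)]
          ring
        rw [step, ih hi', hxval (i + 1) (by omega) hi]
        have e1 : n + 1 - (i + 1) = n - i := by omega
        have e2 : n + 2 - (i + 1) = n + 1 - i := by omega
        rw [e1, e2]
        have h0 : v (n + 1 - i) ≠ 0 := ne_of_gt (hvpos _ (by omega))
        field_simp
  refine ⟨x, ?_, ?_⟩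
  · intro i h1 h2
    rw [hxval i h1 h2]
    have hA : 0 < v (n + 2 - i) := hvpos _ (by omega)
    have hB : 0 < v (n + 1 - i) := hvpos _ (by omega)
    have hle : v (n + 1 - i) ≤ v (n + 2 - i) := by
      have e : n + 2 - i = (n + 1 - i) + 1 := by omega
      rw [e]
      exact hmono _
    exact ⟨div_nonneg hB.le hA.le, (div_le_one hA).mpr hle⟩
  · intro i h1 h2
    have eW : pathW d x (i - 1) = v (n + 2 - i) := by
      rw [hW (i - 1) (by omega)]
      congr 1
      omega
    have hA : 0 < v (n + 2 - i) := hvpos _ (by omega)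
    have hB : 0 < v (n + 1 - i) := hvpos _ (by omega)
    have hrec' : v (n + 2 - i) = v (n + 1 - i) +
        (v (n + 1 - i) - v (n - i)) * ((v (n + 1 - i) - d i) / v (n + 1 - i)) := by
      have := hrec (n - i) (by omega)
      have e1 : n - i + 2 = n + 2 - i := by omega
      have e2 : n - i + 1 = n + 1 - i := by omega
      have e3 : n - (n - i) = i := by omega
      rw [e1, e2, e3] at this
      exact this
    rw [eW, hxval i h1 h2]
    rcases eq_or_ne i n with heq | hne
    · rw [if_pos heq]
      have e0 : n - i = 0 := by omega
      rw [e0, hv0] at hrec'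
      field_simp at hrec' ⊢
      nlinarith [hrec']
    · simp only [if_neg hne]
      rw [hxval (i + 1) (by omega) (by omega)]
      have e1 : n + 1 - (i + 1) = n - i := by omega
      have e2 : n + 2 - (i + 1) = n + 1 - i := by omega
      rw [e1, e2]
      have hC : 0 ≤ v (n - i) := by
        rcases Nat.eq_zero_or_pos (n - i) with h | h
        · rw [h, hv0]
        · exact (hvpos _ h).le
      field_simp at hrec' ⊢
      nlinarith [hrec']
end

section
/- A path bargaining instance has at most one fixed point: if x and y are both share vectors in [0,1]^n satisfying all n bargaining equations, then x = y. -/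
lemma pathW_zero (d x : ℕ → ℝ) : pathW d x 0 = d 0 := by
  simp [pathW]

lemma pathW_succ (d x : ℕ → ℝ) (m : ℕ) :
    pathW d x (m + 1) = pathW d x m * x (m + 1) := by
  rw [pathW, pathW, Finset.prod_Icc_succ_top (Nat.le_add_left 1 m), mul_assoc]

lemma pathW_pred (d x : ℕ → ℝ) {i : ℕ} (hi : 1 ≤ i) :
    pathW d x i = pathW d x (i - 1) * x i := by
  cases i with
  | zero => omega
  | succ m => simpa using pathW_succ d x m

lemma pathW_pos (n : ℕ) (d x : ℕ → ℝ) (hd0 : 0 < d 0)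
    (hd : ∀ i, 1 ≤ i → i ≤ n → 0 ≤ d i ∧ d i < d 0)
    (hx : IsPathFixedPoint n d x) :
    ∀ i, i ≤ n → 0 < pathW d x i := by
  intro i
  induction i with
  | zero => intro _; simpa [pathW_zero] using hd0
  | succ m ih =>
    intro hm
    have ha := ih (by omega)
    have he := hx.2 (m+1) (by omega) hm
    simp only [Nat.add_sub_cancel] at he
    set t := (if m + 1 = n then 0 else x (m + 1 + 1)) with htdef
    have ht : 0 ≤ t ∧ t ≤ 1 := by
      by_cases h : m + 1 = n
      · simp [htdef, h]
      · simp only [htdef, if_neg h]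
        exact hx.1 (m+1+1) (by omega) (by omega)
    have hdm := (hd (m+1) (by omega) hm).1
    have hx1 := hx.1 (m+1) (by omega) hm
    rw [pathW_succ d x m]
    nlinarith [ht.1, ht.2, hdm, hx1.1, hx1.2, ha, he]

lemma pathW_cascade (n : ℕ) (d x : ℕ → ℝ) (hd0 : 0 < d 0)
    (hd : ∀ i, 1 ≤ i → i ≤ n → 0 ≤ d i ∧ d i < d 0)
    (hx : IsPathFixedPoint n d x) (m : ℕ) (hmn : m ≤ n) (hxm : x m = 1) :
    ∀ j, 1 ≤ j → j ≤ m → x j = 1 := by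
  have hpos := pathW_pos n d x hd0 hd hx
  have key : ∀ k j, j + k = m → 1 ≤ j → x j = 1 := by
    intro k
    induction k with
    | zero =>
      intro j hj _
      have : j = m := by omega
      rw [this]; exact hxm
    | succ k ih =>
      intro j hjk hj1
      have hnext : x (j+1) = 1 := ih (j+1) (by omega) (by omega)
      have he := hx.2 j hj1 (by omega)
      have hjn : j ≠ n := by omega
      rw [if_neg hjn, hnext] at he
      norm_num at he
      have hW : 0 < pathW d x (j - 1) := hpos (j-1) (by omega)
      have hle := (hx.1 j hj1 (by omega)).2
      rcases he with h | h
      · linarith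
      · linarith
  intro j hj1 hjm
  exact key (m - j) j (by omega) hj1

lemma pathW_x_lt_one (n : ℕ) (d x : ℕ → ℝ) (hd0 : 0 < d 0)
    (hd : ∀ i, 1 ≤ i → i ≤ n → 0 ≤ d i ∧ d i < d 0)
    (hx : IsPathFixedPoint n d x) :
    ∀ i, 1 ≤ i → i ≤ n → x i < 1 := by
  have core : ∀ m, 1 ≤ m → m ≤ n → (m = n ∨ x (m+1) < 1) → x m < 1 := by
    intro m hm1 hmn hnext
    by_contra hcon
    push_neg at hcon
    have hxm : x m = 1 := le_antisymm (hx.1 m hm1 hmn).2 hcon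
    have he := hx.2 m hm1 hmn
    set t := (if m = n then 0 else x (m + 1)) with htdef
    have ht : t < 1 := by
      by_cases h : m = n
      · simp [htdef, h]
      · rw [htdef, if_neg h]
        exact hnext.resolve_left h
    rw [hxm] at he
    have h0 : (1 - t) * (pathW d x (m-1) - d m) = 0 := by linear_combination -he
    have hW : pathW d x (m-1) = d m := by
      rcases mul_eq_zero.mp h0 with h | h
      · linarith
      · linarith
    have hall := pathW_cascade n d x hd0 hd hx m hmn hxm
    have hprod : ∏ j ∈ Finset.Icc 1 (m-1), x j = 1 := by
      apply Finset.prod_eq_one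
      intro j hj
      rw [Finset.mem_Icc] at hj
      exact hall j hj.1 (by omega)
    have hW0 : pathW d x (m-1) = d 0 := by
      rw [pathW, hprod, mul_one]
    have := (hd m hm1 hmn).2
    linarith
  have main : ∀ k j, n ≤ j + k → 1 ≤ j → j ≤ n → x j < 1 := by
    intro k
    induction k with
    | zero =>
      intro j h1 h2 h3
      exact core j h2 h3 (Or.inl (by omega))
    | succ k ih =>
      intro j h1 h2 h3
      by_cases hj : n ≤ j + k
      · exact ih j hj h2 h3
      · exact core j h2 h3 (Or.inr (ih (j+1) (by omega) (by omega) (by omega)))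
  intro i h1 h2
  exact main n i (by omega) h1 h2

lemma pathW_ge_d (n : ℕ) (d x : ℕ → ℝ) (hd0 : 0 < d 0)
    (hd : ∀ i, 1 ≤ i → i ≤ n → 0 ≤ d i ∧ d i < d 0)
    (hx : IsPathFixedPoint n d x) :
    ∀ i, 1 ≤ i → i ≤ n → d i ≤ pathW d x i := by
  intro i hi1 hin
  have hpos := pathW_pos n d x hd0 hd hx
  have hlt := pathW_x_lt_one n d x hd0 hd hx
  have he := hx.2 i hi1 hin
  set t := (if i = n then 0 else x (i + 1)) with htdef
  have ht : t < 1 := by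
    by_cases h : i = n
    · simp [htdef, h]
    · rw [htdef, if_neg h]
      exact hlt (i+1) (by omega) (by omega)
  have hW : pathW d x i = pathW d x (i-1) * x i := pathW_pred d x hi1
  have hA0 : 0 < pathW d x (i-1) := hpos (i-1) (by omega)
  have hxi := hx.1 i hi1 hin
  nlinarith [he, hW, hA0, hxi.1, hxi.2, ht]

lemma pathW_decr (n : ℕ) (d x : ℕ → ℝ) (hd0 : 0 < d 0)
    (hd : ∀ i, 1 ≤ i → i ≤ n → 0 ≤ d i ∧ d i < d 0)
    (hx : IsPathFixedPoint n d x) :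
    ∀ i, 1 ≤ i → i ≤ n → pathW d x i ≤ pathW d x (i-1) := by
  intro i hi1 hin
  have hA0 : 0 < pathW d x (i-1) := pathW_pos n d x hd0 hd hx (i-1) (by omega)
  have hxi := hx.1 i hi1 hin
  rw [pathW_pred d x hi1]
  nlinarith [hxi.1, hxi.2]

lemma pathW_chain (n : ℕ) (hn : 1 ≤ n) (d x y : ℕ → ℝ) (hd0 : 0 < d 0)
    (hd : ∀ i, 1 ≤ i → i ≤ n → 0 ≤ d i ∧ d i < d 0)
    (hx : IsPathFixedPoint n d x) (hy : IsPathFixedPoint n d y)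
    (hab : pathW d y n ≤ pathW d x n) :
    ∀ i, 1 ≤ i → i ≤ n →
      pathW d x i - pathW d y i ≤ pathW d x (i-1) - pathW d y (i-1) ∧
      0 ≤ pathW d x i - pathW d y i := by
  have hposx := pathW_pos n d x hd0 hd hx
  have hposy := pathW_pos n d y hd0 hd hy
  have hgex := pathW_ge_d n d x hd0 hd hx
  have hgey := pathW_ge_d n d y hd0 hd hy
  have hdecy := pathW_decr n d y hd0 hd hy
  have main : ∀ k i, i + k = n → 1 ≤ i →
      pathW d x i - pathW d y i ≤ pathW d x (i-1) - pathW d y (i-1) ∧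
      0 ≤ pathW d x i - pathW d y i := by
    intro k
    induction k with
    | zero =>
      intro i hik hi1
      have hin : i = n := by omega
      subst hin
      have hWx : pathW d x i = pathW d x (i-1) * x i := pathW_pred d x hi1
      have hWy : pathW d y i = pathW d y (i-1) * y i := pathW_pred d y hi1
      have hex := hx.2 i hi1 le_rfl
      have hey := hy.2 i hi1 le_rfl
      rw [if_pos rfl] at hex hey
      have ex : pathW d x (i-1) = 2 * pathW d x i - d i := by
        linear_combination hex - 2 * hWx
      have ey : pathW d y (i-1) = 2 * pathW d y i - d i := by
        linear_combination hey - 2 * hWy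
      constructor <;> linarith
    | succ k ih =>
      intro i hik hi1
      have hin : i < n := by omega
      have hIH := ih (i+1) (by omega) (by omega)
      simp only [Nat.add_sub_cancel] at hIH
      have hA2 : x i * pathW d x (i-1) = pathW d x i := by
        rw [pathW_pred d x hi1]; ring
      have hB2 : y i * pathW d y (i-1) = pathW d y i := by
        rw [pathW_pred d y hi1]; ring
      have hA'2 : x (i+1) * pathW d x i = pathW d x (i+1) := by
        rw [pathW_succ d x i]; ring
      have hB'2 : y (i+1) * pathW d y i = pathW d y (i+1) := by
        rw [pathW_succ d y i]; ring
      have hex := hx.2 i hi1 (by omega)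
      have hey := hy.2 i hi1 (by omega)
      rw [if_neg (by omega : i ≠ n), hA2] at hex
      rw [if_neg (by omega : i ≠ n), hB2] at hey
      have E1 : (pathW d x (i-1) - pathW d x i) * pathW d x i =
          (pathW d x i - pathW d x (i+1)) * (pathW d x i - d i) := by
        linear_combination pathW d x i * hex + pathW d x i * hA2 +
          (d i - pathW d x i) * hA'2
      have E2 : (pathW d y (i-1) - pathW d y i) * pathW d y i =
          (pathW d y i - pathW d y (i+1)) * (pathW d y i - d i) := by
        linear_combination pathW d y i * hey + pathW d y i * hB2 +
          (d i - pathW d y i) * hB'2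
      have hApos := hposx i (by omega)
      have hBpos := hposy i (by omega)
      have hDA := hgex i hi1 (by omega)
      have hDB := hgey i hi1 (by omega)
      have hD0 := (hd i hi1 (by omega)).1
      have hB' : pathW d y (i+1) ≤ pathW d y i := by
        have := hdecy (i+1) (by omega) (by omega)
        simpa using this
      have hA'0 : 0 ≤ pathW d x (i+1) := (hposx (i+1) (by omega)).le
      have key : pathW d x i * pathW d y i *
          ((pathW d x (i-1) - pathW d y (i-1)) - (pathW d x i - pathW d y i)) =
          ((pathW d x i - pathW d y i) - (pathW d x (i+1) - pathW d y (i+1))) *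
            (pathW d y i * (pathW d x i - d i)) +
          (pathW d y i - pathW d y (i+1)) * (d i * (pathW d x i - pathW d y i)) := by
        linear_combination pathW d y i * E1 - pathW d x i * E2
      have hΔ1 := hIH.1
      have hΔ0 := hIH.2
      have h1 : 0 ≤ ((pathW d x i - pathW d y i) - (pathW d x (i+1) - pathW d y (i+1))) *
          (pathW d y i * (pathW d x i - d i)) :=
        mul_nonneg (by linarith) (mul_nonneg hBpos.le (by linarith))
      have h2 : 0 ≤ (pathW d y i - pathW d y (i+1)) * (d i * (pathW d x i - pathW d y i)) :=
        mul_nonneg (by linarith) (mul_nonneg hD0 (by linarith))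
      have h3 : 0 ≤ pathW d x i * pathW d y i *
          ((pathW d x (i-1) - pathW d y (i-1)) - (pathW d x i - pathW d y i)) := by
        rw [key]; linarith
      constructor
      · nlinarith [h3, mul_pos hApos hBpos]
      · linarith
  intro i hi1 hin
  exact main (n - i) i (by omega) hi1

lemma pathW_eq_of_le (n : ℕ) (hn : 1 ≤ n) (d x y : ℕ → ℝ) (hd0 : 0 < d 0)
    (hd : ∀ i, 1 ≤ i → i ≤ n → 0 ≤ d i ∧ d i < d 0)
    (hx : IsPathFixedPoint n d x) (hy : IsPathFixedPoint n d y)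
    (hab : pathW d y n ≤ pathW d x n) :
    ∀ i, i ≤ n → pathW d x i = pathW d y i := by
  have hc := pathW_chain n hn d x y hd0 hd hx hy hab
  have hstep : ∀ i, i ≤ n → pathW d x i - pathW d y i ≤ 0 := by
    intro i
    induction i with
    | zero => intro _; simp [pathW_zero]
    | succ m ih =>
      intro h
      have h2 := hc (m+1) (by omega) h
      have h3 := ih (by omega)
      simp only [Nat.add_sub_cancel] at h2
      linarith [h2.1]
  intro i hi
  rcases Nat.eq_zero_or_pos i with h0 | h1
  · rw [h0, pathW_zero, pathW_zero]
  · have := hc i h1 hi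
    have := hstep i hi
    linarith [(hc i h1 hi).2, hstep i hi]

/-- A path bargaining instance has at most one fixed point. -/
theorem path_fixed_point_unique (n : ℕ) (hn : 1 ≤ n) (d : ℕ → ℝ)
    (hd0 : 0 < d 0) (hd : ∀ i, 1 ≤ i → i ≤ n → 0 ≤ d i ∧ d i < d 0)
    (x y : ℕ → ℝ) (hx : IsPathFixedPoint n d x) (hy : IsPathFixedPoint n d y) :
    ∀ i, 1 ≤ i → i ≤ n → x i = y i := by
  have heqW : ∀ j, j ≤ n → pathW d x j = pathW d y j := by
    rcases le_total (pathW d y n) (pathW d x n) with h | h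
    · exact pathW_eq_of_le n hn d x y hd0 hd hx hy h
    · intro j hj
      exact (pathW_eq_of_le n hn d y x hd0 hd hy hx h j hj).symm
  intro i hi1 hin
  have h1 : pathW d x i = pathW d y i := heqW i hin
  have hpre : pathW d x (i-1) = pathW d y (i-1) := heqW (i-1) (by omega)
  have hApos : 0 < pathW d x (i-1) := pathW_pos n d x hd0 hd hx (i-1) (by omega)
  rw [pathW_pred d x hi1, pathW_pred d y hi1, ← hpre] at h1
  exact mul_left_cancel₀ (ne_of_gt hApos) h1
end

section
/- Lower bounds at the fixed point: let x* be the unique fixed point of a path bargaining instance. Then for every i = 1,…,n: x*_i ≥ 1/(2 − x*_{i+1}) (with x*_{n+1} = 0); consequently x*_i ≥ (n−i+1)/(n−i+2), and w*_i = d_0·∏_{j=1}^{i} x*_j ≥ d_0·(n−i+1)/(n+1). -/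
/-- Lower bounds at the fixed point. -/
theorem fixed_point_lower_bounds (n : ℕ) (hn : 1 ≤ n) (d : ℕ → ℝ)
    (hd0 : 0 < d 0) (hd : ∀ j, 1 ≤ j → j ≤ n → 0 ≤ d j ∧ d j < d 0)
    (x : ℕ → ℝ) (hx : IsPathFixedPoint n d x) :
    ∀ i, 1 ≤ i → i ≤ n →
      1 / (2 - (if i = n then 0 else x (i + 1))) ≤ x i ∧
      ((n - i + 1 : ℕ) : ℝ) / ((n - i + 2 : ℕ) : ℝ) ≤ x i ∧
      d 0 * ((n - i + 1 : ℕ) : ℝ) / ((n + 1 : ℕ) : ℝ) ≤ pathW d x i := by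
  obtain ⟨hsv, heq⟩ := hx
  -- recurrence
  have hrec : ∀ j : ℕ, pathW d x (j + 1) = pathW d x j * x (j + 1) := by
    intro j
    unfold pathW
    rw [Finset.prod_Icc_succ_top (Nat.succ_le_succ (Nat.zero_le j)), mul_assoc]
  have hW0 : pathW d x 0 = d 0 := by simp [pathW]
  -- bounds on the "next share" term
  have hnext : ∀ i, 1 ≤ i → i ≤ n →
      0 ≤ (if i = n then 0 else x (i + 1)) ∧ (if i = n then 0 else x (i + 1)) ≤ 1 := by
    intro i hi hin
    split
    · norm_num
    · rename_i h
      exact hsv (i + 1) (by omega) (by omega)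
  -- the step inequality from the fixed point equation
  have hstep : ∀ i, 1 ≤ i → i ≤ n → 0 < pathW d x (i - 1) →
      1 ≤ x i * (2 - (if i = n then 0 else x (i + 1))) := by
    intro i hi hin hw
    have e := heq i hi hin
    obtain ⟨hd1, hd2⟩ := hd i hi hin
    obtain ⟨hx1, hx2⟩ := hsv i hi hin
    obtain ⟨hn1, hn2⟩ := hnext i hi hin
    set x' := (if i = n then 0 else x (i + 1)) with hx'
    set w := pathW d x (i - 1) with hwdef
    nlinarith [mul_nonneg (by linarith : (0:ℝ) ≤ 1 - x') hd1, mul_pos hw hw]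
  -- forward: positivity of w and the first bound
  have key : ∀ i, 1 ≤ i → i ≤ n →
      0 < pathW d x (i - 1) ∧ 1 ≤ x i * (2 - (if i = n then 0 else x (i + 1))) := by
    intro i hi
    induction i, hi using Nat.le_induction with
    | base =>
      intro hin
      have hw : 0 < pathW d x 0 := hW0 ▸ hd0
      exact ⟨hw, hstep 1 le_rfl hin hw⟩
    | succ i hi ih =>
      intro hin
      obtain ⟨hw, hb⟩ := ih (by omega)
      obtain ⟨hn1, hn2⟩ := hnext i hi (by omega)
      obtain ⟨hx1, hx2⟩ := hsv i hi (by omega)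
      have hxipos : 0 < x i := by nlinarith
      have hw' : 0 < pathW d x i := by
        have : pathW d x i = pathW d x (i - 1) * x i := by
          have : i - 1 + 1 = i := by omega
          rw [← this, hrec, this]
        rw [this]; exact mul_pos hw hxipos
      have : (i + 1 : ℕ) - 1 = i := by omega
      rw [this]
      exact ⟨hw', hstep (i + 1) (by omega) hin hw'⟩
  -- downward induction: x_i ≥ (k+1)/(k+2) where k = n - i
  have down : ∀ k : ℕ, ∀ i, 1 ≤ i → i ≤ n → n - i = k →
      ((k : ℝ) + 1) / ((k : ℝ) + 2) ≤ x i := by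
    intro k
    induction k with
    | zero =>
      intro i hi hin hk
      have hieq : i = n := by omega
      have hb := (key i hi hin).2
      rw [if_pos hieq] at hb
      norm_num
      linarith
    | succ k ihk =>
      intro i hi hin hk
      have hne : i ≠ n := by omega
      have hb := (key i hi hin).2
      rw [if_neg hne] at hb
      have hc := ihk (i + 1) (by omega) (by omega) (by omega)
      obtain ⟨hx1, hx2⟩ := hsv i hi hin
      obtain ⟨hy1, hy2⟩ := hsv (i + 1) (by omega) (by omega)
      have hk2 : (0:ℝ) < (k : ℝ) + 2 := by positivity
      have hc' : (k : ℝ) + 1 ≤ x (i + 1) * ((k : ℝ) + 2) := by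
        rwa [div_le_iff₀ hk2] at hc
      push_cast
      rw [div_le_iff₀ (by positivity)]
      nlinarith [mul_le_mul_of_nonneg_left hc' hx1]
  -- forward induction for w
  have up : ∀ i, i ≤ n → d 0 * ((n - i + 1 : ℕ) : ℝ) / ((n + 1 : ℕ) : ℝ) ≤ pathW d x i := by
    intro i
    induction i with
    | zero =>
      intro _
      rw [hW0]
      have : n - 0 + 1 = n + 1 := by omega
      rw [this, mul_div_assoc, div_self (by positivity), mul_one]
    | succ i ihi =>
      intro hin
      have hA := ihi (by omega)
      have hB := down (n - (i + 1)) (i + 1) (by omega) hin rfl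
      obtain ⟨hy1, hy2⟩ := hsv (i + 1) (by omega) hin
      set m : ℕ := n - (i + 1) with hm
      have h1 : n - i + 1 = m + 2 := by omega
      have h2 : n - (i + 1) + 1 = m + 1 := by omega
      rw [h1] at hA
      rw [h2]
      have hApos : 0 ≤ pathW d x i := le_trans (by positivity) hA
      have hmul : (d 0 * ((m + 2 : ℕ) : ℝ) / ((n + 1 : ℕ) : ℝ)) * (((m : ℝ) + 1) / ((m : ℝ) + 2))
          ≤ pathW d x i * x (i + 1) := by
        apply mul_le_mul hA hB (by positivity) hApos
      rw [hrec]
      refine le_trans (le_of_eq ?_) hmul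
      push_cast
      field_simp
  -- assemble
  intro i hi hin
  obtain ⟨hw, hb⟩ := key i hi hin
  obtain ⟨hn1, hn2⟩ := hnext i hi hin
  refine ⟨?_, ?_, ?_⟩
  · rw [div_le_iff₀ (by linarith)]
    linarith
  · have := down (n - i) i hi hin rfl
    have h1 : n - i + 1 = (n - i) + 1 := rfl
    have h2 : n - i + 2 = (n - i) + 2 := rfl
    push_cast
    convert this using 2 <;> push_cast <;> ring
  · exact up i hin
end

section
/- Quantitative bounds at the fixed point: assume d_0 = 1 and let γ = min(1 − max_{1 ≤ i ≤ n} d_i, 1/(n+2)). Then the unique fixed point x* satisfies, for every i = 1,…,n: x*_i ≤ 1 − γ^{4n} and w*_i ≥ d_i + γ^{4n+1}, where w*_i = ∏_{j=1}^{i} x*_j. -/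
set_option maxHeartbeats 2000000 in
/-- Quantitative bounds at the fixed point, with `d 0 = 1`. -/
theorem fixed_point_quantitative_bounds (n : ℕ) (hn : 1 ≤ n) (d : ℕ → ℝ)
    (hd0 : d 0 = 1) (hd : ∀ j, 1 ≤ j → j ≤ n → 0 ≤ d j ∧ d j < d 0)
    (x : ℕ → ℝ) (hx : IsPathFixedPoint n d x)
    (γ : ℝ)
    (hγ : γ = min (1 - (Finset.Icc 1 n).sup' (Finset.nonempty_Icc.mpr hn) d)
      (1 / ((n : ℝ) + 2))) :
    ∀ i, 1 ≤ i → i ≤ n →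
      x i ≤ 1 - γ ^ (4 * n) ∧ d i + γ ^ (4 * n + 1) ≤ pathW d x i := by
  obtain ⟨hxsv, hfp⟩ := hx
  set w : ℕ → ℝ := pathW d x with hw
  have hnR : (1 : ℝ) ≤ (n : ℝ) := by exact_mod_cast hn
  -- basic facts about γ
  have hγpos : 0 < γ := by
    rw [hγ]
    apply lt_min
    · have : (Finset.Icc 1 n).sup' (Finset.nonempty_Icc.mpr hn) d < 1 := by
        rw [Finset.sup'_lt_iff]
        intro b hb
        rw [Finset.mem_Icc] at hb
        have := hd b hb.1 hb.2
        linarith [this.2, hd0.symm ▸ this.2]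
      linarith
    · positivity
  have hγn : γ ≤ 1 / ((n : ℝ) + 2) := hγ ▸ min_le_right _ _
  have hγd : ∀ j, 1 ≤ j → j ≤ n → d j ≤ 1 - γ := by
    intro j h1 h2
    have hmem : j ∈ Finset.Icc 1 n := Finset.mem_Icc.mpr ⟨h1, h2⟩
    have := Finset.le_sup' d hmem
    have h' : γ ≤ 1 - (Finset.Icc 1 n).sup' (Finset.nonempty_Icc.mpr hn) d :=
      hγ ▸ min_le_left _ _
    linarith
  have hγ3 : γ ≤ 1 / 3 := by
    have : (1 : ℝ) / ((n : ℝ) + 2) ≤ 1 / 3 := by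
      apply div_le_div_of_nonneg_left <;> linarith
    linarith
  have hγ1 : γ ≤ 1 := by linarith
  have hcube : γ ^ 3 ≤ γ / 2 := by
    have hsq : γ ^ 2 ≤ 1 / 2 := by nlinarith
    nlinarith [hγpos, hsq]
  have hm2 : γ * ((n : ℝ) + 2) ≤ 1 := by
    rw [le_div_iff₀ (by positivity : (0:ℝ) < (n : ℝ) + 2)] at hγn
    linarith
  have hsq1 : (γ * ((n : ℝ) + 2)) ^ 2 ≤ 1 := by
    nlinarith [mul_nonneg hγpos.le (by positivity : (0:ℝ) ≤ (n : ℝ) + 2)]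
  have h2n : 2 * (n : ℝ) * γ ^ 2 ≤ 1 := by
    nlinarith [mul_nonneg (by positivity : (0:ℝ) ≤ ((n:ℝ)^2 + 2*(n:ℝ) + 4)) (sq_nonneg γ)]
  have h3 : 2 * (n : ℝ) * γ ^ 3 ≤ γ := by nlinarith [h2n, hγpos]
  -- recurrence for w
  have hw0 : w 0 = 1 := by simp [hw, pathW, hd0]
  have hwrec : ∀ k : ℕ, w (k + 1) = x (k + 1) * w k := by
    intro k
    simp only [hw, pathW, Finset.prod_Icc_succ_top (Nat.le_add_left 1 k)]
    ring
  -- the fixed point equation, rewritten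
  have heq2 : ∀ k, k + 1 ≤ n →
      w k - w (k + 1) = (1 - (if k + 1 = n then 0 else x (k + 1 + 1))) *
        (w (k + 1) - d (k + 1)) := by
    intro k hk
    have h := hfp (k + 1) (Nat.le_add_left 1 k) hk
    simp only [Nat.add_sub_cancel] at h
    rw [hwrec k]
    have : (1 - x (k + 1)) * w k = w k - x (k+1) * w k := by ring
    rw [← this]
    exact h
  -- bounds for the "next share" term
  have hXb : ∀ k, k + 1 ≤ n →
      0 ≤ (if k + 1 = n then 0 else x (k + 1 + 1)) ∧
      (if k + 1 = n then 0 else x (k + 1 + 1)) ≤ 1 := by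
    intro k hk
    split_ifs with h
    · norm_num
    · exact hxsv (k + 2) (by omega) (by omega)
  -- positivity of w
  have hwpos : ∀ i, i ≤ n → 0 < w i := by
    intro i
    induction i with
    | zero => intro _; rw [hw0]; norm_num
    | succ k ih =>
      intro hk
      have hwk : 0 < w k := ih (by omega)
      have hxk := hxsv (k + 1) (Nat.le_add_left 1 k) hk
      rw [hwrec k]
      rcases lt_or_ge 0 (x (k + 1)) with h | h
      · positivity
      · exfalso
        have hx0 : x (k + 1) = 0 := le_antisymm h hxk.1
        have heqk := heq2 k hk
        have hX := hXb k hk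
        have hdk := hd (k + 1) (Nat.le_add_left 1 k) hk
        obtain ⟨X, hXeq⟩ : ∃ X : ℝ, (if k + 1 = n then 0 else x (k + 1 + 1)) = X := ⟨_, rfl⟩
        rw [hXeq] at heqk hX
        rw [hwrec k, hx0] at heqk
        have hmn : 0 ≤ (1 - X) * d (k + 1) := mul_nonneg (by linarith [hX.2]) hdk.1
        nlinarith [heqk, hmn, hwk]
  -- w is at most 1
  have hwle1 : ∀ i, i ≤ n → w i ≤ 1 := by
    intro i
    induction i with
    | zero => intro _; rw [hw0]
    | succ k ih =>
      intro hk
      have h1 := ih (by omega)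
      have h2 := hwpos k (by omega)
      have hxk := hxsv (k + 1) (Nat.le_add_left 1 k) hk
      rw [hwrec k]
      nlinarith [hxk.1, hxk.2]
  -- w is nonincreasing (gap is nonneg)
  have hG : ∀ k, k + 1 ≤ n → 0 ≤ w k - w (k + 1) := by
    intro k hk
    have hxk := hxsv (k + 1) (Nat.le_add_left 1 k) hk
    have h2 := hwpos k (by omega)
    rw [hwrec k]
    nlinarith [hxk.2]
  -- the key product identity between consecutive gaps
  have hstar : ∀ k, k + 2 ≤ n →
      (w k - w (k + 1)) * w (k + 1) =
        (w (k + 1) - w (k + 2)) * (w (k + 1) - d (k + 1)) := by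
    intro k hk
    have h1 := heq2 k (by omega)
    rw [if_neg (by omega : ¬ k + 1 = n)] at h1
    have h2 : w (k + 1) - w (k + 2) = (1 - x (k + 2)) * w (k + 1) := by
      rw [hwrec (k + 1)]; ring
    rw [h1, h2]
    ring
  -- the gaps are nondecreasing
  have hgmono : ∀ k, k + 2 ≤ n → w k - w (k + 1) ≤ w (k + 1) - w (k + 2) := by
    intro k hk
    have hs := hstar k hk
    have hp := hwpos (k + 1) (by omega)
    have hg2 := hG (k + 1) hk
    have hdk := hd (k + 1) (by omega) (by omega)
    nlinarith [mul_nonneg hg2 hdk.1]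
  -- chain of gap monotonicity
  have hgch : ∀ k, k + 1 ≤ n → ∀ j, j ≤ k → w j - w (j + 1) ≤ w k - w (k + 1) := by
    intro k
    induction k with
    | zero => intro _ j hj; interval_cases j; exact le_rfl
    | succ m ih =>
      intro hk j hj
      rcases Nat.eq_or_lt_of_le hj with h | h
      · rw [h]
      · exact le_trans (ih (by omega) j (by omega)) (hgmono m hk)
  -- uniform lower bound for the surplus e_i = w_i - d_i
  have hE : ∀ k, k + 1 ≤ n → γ ^ 3 ≤ w (k + 1) - d (k + 1) := by
    intro k hk
    have hdk := hγd (k + 1) (Nat.le_add_left 1 k) hk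
    by_cases hc : (1 : ℝ) - γ / 2 ≤ w (k + 1)
    · linarith
    · push_neg at hc
      -- telescoping sum
      have htel : ∑ j ∈ Finset.range (k + 1), (w j - w (j + 1)) = w 0 - w (k + 1) :=
        Finset.sum_range_sub' w (k + 1)
      have hsum_le : ∑ j ∈ Finset.range (k + 1), (w j - w (j + 1)) ≤
          ((k : ℝ) + 1) * (w k - w (k + 1)) := by
        have h1 : ∑ j ∈ Finset.range (k + 1), (w j - w (j + 1)) ≤
            (Finset.range (k + 1)).card • (w k - w (k + 1)) := by
          apply Finset.sum_le_card_nsmul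
          intro j hj
          have hjk := Finset.mem_range.mp hj
          exact hgch k hk j (by omega)
        rw [Finset.card_range, nsmul_eq_mul] at h1
        push_cast at h1
        linarith
      have hkn : ((k : ℝ) + 1) ≤ (n : ℝ) := by exact_mod_cast hk
      have hg1 := hG k hk
      -- γ/2 < (k+1)·g ≤ n·g, so γ < 2·n·g
      have hng : γ < 2 * (n : ℝ) * (w k - w (k + 1)) := by
        rw [hw0] at htel
        nlinarith [hg1]
      have hgpos : 0 < w k - w (k + 1) := by nlinarith [hγpos]
      -- e ≥ g
      have heqk := heq2 k hk
      have hX := hXb k hk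
      obtain ⟨X, hXeq⟩ : ∃ X : ℝ, (if k + 1 = n then 0 else x (k + 1 + 1)) = X := ⟨_, rfl⟩
      rw [hXeq] at heqk hX
      have hepos : 0 < w (k + 1) - d (k + 1) := by
        rcases lt_or_ge 0 (w (k + 1) - d (k + 1)) with h | h
        · exact h
        · exfalso
          have : (1 - X) * (w (k + 1) - d (k + 1)) ≤ 0 :=
            mul_nonpos_of_nonneg_of_nonpos (by linarith [hX.2]) h
          linarith [heqk ▸ this]
      have hge : w k - w (k + 1) ≤ w (k + 1) - d (k + 1) := by
        rw [heqk]
        nlinarith [hX.1, hepos]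
      have h4 : γ ^ 3 < w k - w (k + 1) := by
        by_contra hcon
        push_neg at hcon
        have : 2 * (n : ℝ) * (w k - w (k + 1)) ≤ 2 * (n : ℝ) * γ ^ 3 :=
          mul_le_mul_of_nonneg_left hcon (by linarith)
        linarith
      linarith
  -- backward induction: g_{k+1} ≥ γ^{3m}·e_{k+1} when k+1+m = n
  have hC : ∀ m k, k + 1 + m = n →
      γ ^ (3 * m) * (w (k + 1) - d (k + 1)) ≤ w k - w (k + 1) := by
    intro m
    induction m with
    | zero =>
      intro k hk
      have h := heq2 k (by omega)
      rw [if_pos (by omega : k + 1 = n)] at h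
      rw [h]
      norm_num
    | succ m ih =>
      intro k hk
      have h2 : k + 2 ≤ n := by omega
      have ihk := ih (k + 1) (by omega)
      have hs := hstar k h2
      have he1 := hE k (by omega)
      have he2 := hE (k + 1) h2
      have hw1 := hwle1 (k + 1) (by omega)
      have hg1 := hG k (by omega)
      have hp : (0 : ℝ) ≤ γ ^ (3 * m) := pow_nonneg hγpos.le _
      have he1pos : (0 : ℝ) < w (k + 1) - d (k + 1) :=
        lt_of_lt_of_le (pow_pos hγpos 3) he1
      calc γ ^ (3 * (m + 1)) * (w (k + 1) - d (k + 1))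
          = (γ ^ (3 * m) * γ ^ 3) * (w (k + 1) - d (k + 1)) := by
            rw [show 3 * (m + 1) = 3 * m + 3 by ring, pow_add]
        _ ≤ (γ ^ (3 * m) * (w (k + 2) - d (k + 2))) * (w (k + 1) - d (k + 1)) :=
            mul_le_mul_of_nonneg_right (mul_le_mul_of_nonneg_left he2 hp) he1pos.le
        _ ≤ (w (k + 1) - w (k + 2)) * (w (k + 1) - d (k + 1)) :=
            mul_le_mul_of_nonneg_right ihk he1pos.le
        _ = (w k - w (k + 1)) * w (k + 1) := hs.symm
        _ ≤ w k - w (k + 1) := mul_le_of_le_one_right hg1 hw1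
  -- conclusion
  intro i h1i h2i
  obtain ⟨k, rfl⟩ : ∃ k, i = k + 1 := ⟨i - 1, by omega⟩
  have he := hE k h2i
  constructor
  · have hm := hC (n - (k + 1)) k (by omega)
    have hp : (0 : ℝ) ≤ γ ^ (3 * (n - (k + 1))) := pow_nonneg hγpos.le _
    have hgg : γ ^ (3 * (n - (k + 1)) + 3) ≤ w k - w (k + 1) := by
      calc γ ^ (3 * (n - (k + 1)) + 3)
          = γ ^ (3 * (n - (k + 1))) * γ ^ 3 := pow_add γ _ 3
        _ ≤ γ ^ (3 * (n - (k + 1))) * (w (k + 1) - d (k + 1)) :=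
            mul_le_mul_of_nonneg_left he hp
        _ ≤ w k - w (k + 1) := hm
    have h4 : γ ^ (4 * n) ≤ γ ^ (3 * (n - (k + 1)) + 3) :=
      pow_le_pow_of_le_one hγpos.le hγ1 (by omega)
    have hr := hwrec k
    have hwk1 := hwle1 k (by omega)
    have hwkpos := hwpos k (by omega)
    have hx1 := hxsv (k + 1) (Nat.le_add_left 1 k) h2i
    have hA : γ ^ (4 * n) ≤ w k - w (k + 1) := h4.trans hgg
    have hB : w k - w (k + 1) = (1 - x (k + 1)) * w k := by rw [hr]; ring
    have hC2 : (1 - x (k + 1)) * w k ≤ 1 - x (k + 1) :=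
      mul_le_of_le_one_right (by linarith [hx1.2]) hwk1
    linarith
  · have h3 : γ ^ (4 * n + 1) ≤ γ ^ 3 :=
      pow_le_pow_of_le_one hγpos.le hγ1 (by omega)
    show d (k + 1) + γ ^ (4 * n + 1) ≤ w (k + 1)
    linarith
end

section
/- In any fixed point of the tree bargaining equations, every share is strictly positive: x_t > 0 for every non-root node t. -/
/-- A finite rooted tree, given by a parent function: the root is its own
parent, and every node reaches the root by iterating `parent`. -/
structure BTree where
  V : Type
  [instFintype : Fintype V]
  [instDecEq : DecidableEq V]
  root : V
  parent : V → V
  parent_root : parent root = root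
  reaches_root : ∀ t : V, ∃ k : ℕ, parent^[k] t = root

attribute [instance] BTree.instFintype BTree.instDecEq

/-- The children of a node `s`: the non-root nodes whose parent is `s`. -/
def BTree.children (T : BTree) (s : T.V) : Finset T.V :=
  Finset.univ.filter fun t => t ≠ T.root ∧ T.parent t = s

/-- A leaf is a node with no children. -/
def BTree.IsLeaf (T : BTree) (l : T.V) : Prop :=
  T.children l = ∅

/-- Maximum of `f` over a finite set `F`, with value `0` when `F` is empty. -/
noncomputable def fmax {α : Type*} (F : Finset α) (f : α → ℝ) : ℝ :=
  sSup (insert 0 (f '' (F : Set α)))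

/-- `w` is the value function determined by leaf values `v` and shares `x`:
`w l = v l` at each leaf `l`, and `w s = max_{t ∈ children s} x t · w t` at
each internal node `s`. -/
def IsValueFn (T : BTree) (v x w : T.V → ℝ) : Prop :=
  (∀ l, T.IsLeaf l → w l = v l) ∧
  ∀ s, ¬ T.IsLeaf s → w s = fmax (T.children s) fun t => x t * w t

/-- `wexcl T x w s t`: the maximum value reaching `s` from its children other
than `t` (`0` when `t` is the only child). -/
noncomputable def wexcl (T : BTree) (x w : T.V → ℝ) (s t : T.V) : ℝ :=
  fmax ((T.children s).erase t) fun t' => x t' * w t'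

/-- A fixed point of the tree bargaining equations: `x` is a share vector
(`x root = 0`, `x t ∈ [0,1]` off the root), `w` is the induced value function,
and for every non-root `t` with parent `s`:
`(1 − x t)·w t = (1 − x s)·(max(w_{s∖t}, x t · w t) − w_{s∖t})`. -/
def IsTreeFixedPoint (T : BTree) (v x w : T.V → ℝ) : Prop :=
  IsValueFn T v x w ∧
  x T.root = 0 ∧
  (∀ t, t ≠ T.root → 0 ≤ x t ∧ x t ≤ 1) ∧
  ∀ t, t ≠ T.root →
    (1 - x t) * w t =
      (1 - x (T.parent t)) *
        (max (wexcl T x w (T.parent t) t) (x t * w t) - wexcl T x w (T.parent t) t)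

namespace TreeSharesAux

noncomputable def depth (T : BTree) (t : T.V) : ℕ := Nat.find (T.reaches_root t)

lemma depth_spec (T : BTree) (t : T.V) : T.parent^[depth T t] t = T.root :=
  Nat.find_spec (T.reaches_root t)

lemma depth_min (T : BTree) {t : T.V} {k : ℕ} (h : T.parent^[k] t = T.root) :
    depth T t ≤ k := Nat.find_le h

lemma depth_parent_lt (T : BTree) {c : T.V} (hc : c ≠ T.root) :
    depth T (T.parent c) < depth T c := by
  have h1 : 1 ≤ depth T c := by
    rcases Nat.eq_zero_or_pos (depth T c) with h | h
    · exfalso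
      have hs := depth_spec T c
      rw [h] at hs
      exact hc hs
    · exact h
  have h2 : T.parent^[depth T c - 1] (T.parent c) = T.root := by
    rw [← Function.iterate_succ_apply, Nat.succ_eq_add_one]
    have : depth T c - 1 + 1 = depth T c := by omega
    rw [this]
    exact depth_spec T c
  have := depth_min T h2
  omega

lemma depth_lt_card (T : BTree) (t : T.V) : depth T t < Fintype.card T.V := by
  have key : ∀ i j : ℕ, i < j → j ≤ depth T t →
      T.parent^[i] t ≠ T.parent^[j] t := by
    intro i j hij hj he
    have h1 : T.parent^[depth T t - j] (T.parent^[j] t) = T.root := by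
      rw [← Function.iterate_add_apply]
      have : depth T t - j + j = depth T t := by omega
      rw [this]
      exact depth_spec T t
    rw [← he, ← Function.iterate_add_apply] at h1
    have := depth_min T h1
    omega
  have hinj : Function.Injective (fun i : Fin (depth T t + 1) => T.parent^[(i : ℕ)] t) := by
    intro i j hij
    simp only at hij
    by_contra hne
    have hne' : (i : ℕ) ≠ (j : ℕ) := fun h => hne (Fin.ext h)
    have hi := i.isLt
    have hj := j.isLt
    rcases lt_or_gt_of_ne hne' with h | h
    · exact key i j h (by omega) hij
    · exact key j i h (by omega) hij.symm
  have := Fintype.card_le_of_injective _ hinj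
  simp only [Fintype.card_fin] at this
  omega

lemma fmax_bddAbove {α : Type*} (F : Finset α) (f : α → ℝ) :
    BddAbove (insert 0 (f '' (F : Set α))) :=
  (Set.Finite.insert 0 (F.finite_toSet.image f)).bddAbove

lemma fmax_nonneg {α : Type*} (F : Finset α) (f : α → ℝ) : 0 ≤ fmax F f :=
  le_csSup (fmax_bddAbove F f) (Set.mem_insert _ _)

lemma le_fmax {α : Type*} {F : Finset α} (f : α → ℝ) {a : α} (ha : a ∈ F) :
    f a ≤ fmax F f :=
  le_csSup (fmax_bddAbove F f) (Set.mem_insert_of_mem _ ⟨a, ha, rfl⟩)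

lemma fmax_le {α : Type*} {F : Finset α} {f : α → ℝ} {c : ℝ} (h0 : 0 ≤ c)
    (h : ∀ a ∈ F, f a ≤ c) : fmax F f ≤ c := by
  apply csSup_le (Set.insert_nonempty _ _)
  rintro y (rfl | ⟨a, ha, rfl⟩)
  · exact h0
  · exact h a ha

lemma mem_children {T : BTree} {s c : T.V} :
    c ∈ T.children s ↔ c ≠ T.root ∧ T.parent c = s := by
  simp [BTree.children]

lemma w_pos (T : BTree) (v x w : T.V → ℝ)
    (hv : ∀ l, T.IsLeaf l → 0 < v l)
    (hfp : IsTreeFixedPoint T v x w) : ∀ t, 0 < w t := by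
  obtain ⟨⟨hleaf, hint⟩, _hxr, hx01, heq⟩ := hfp
  have hwnn : ∀ t, 0 ≤ w t := by
    intro t
    by_cases hl : T.IsLeaf t
    · rw [hleaf t hl]; exact (hv t hl).le
    · rw [hint t hl]; exact fmax_nonneg _ _
  have key : ∀ n : ℕ, ∀ t : T.V, Fintype.card T.V - depth T t ≤ n → 0 < w t := by
    intro n
    induction n with
    | zero =>
      intro t h
      exfalso
      have := depth_lt_card T t
      omega
    | succ n ih =>
      intro t hn
      by_cases hl : T.IsLeaf t
      · rw [hleaf t hl]; exact hv t hl
      · -- t is internal; pick a child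
        obtain ⟨c, hc⟩ : ∃ c, c ∈ T.children t := by
          by_contra hno
          push_neg at hno
          exact hl (Finset.eq_empty_iff_forall_notMem.mpr hno)
        obtain ⟨hcr, hcp⟩ := mem_children.mp hc
        have hdc : depth T t < depth T c := by
          have := depth_parent_lt T hcr
          rw [hcp] at this
          exact this
        have hwc : 0 < w c := by
          apply ih c
          have := depth_lt_card T t
          omega
        -- suppose w t = 0, derive contradiction
        rcases lt_or_eq_of_le (hwnn t) with hwt | hwt
        · exact hwt
        exfalso
        have hwteq : w t = fmax (T.children t) fun u => x u * w u := hint t hl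
        -- every child term is 0
        have hterm : ∀ u ∈ T.children t, x u * w u = 0 := by
          intro u hu
          have h1 : x u * w u ≤ 0 := by
            have := le_fmax (fun u => x u * w u) hu
            rw [← hwteq, ← hwt] at this
            exact this
          have h2 : 0 ≤ x u * w u :=
            mul_nonneg (hx01 u (mem_children.mp hu).1).1 (hwnn u)
          linarith
        -- wexcl at c is 0
        have hwe : wexcl T x w t c = 0 := by
          have h1 : wexcl T x w t c ≤ 0 := by
            apply fmax_le le_rfl
            intro u hu
            exact le_of_eq (hterm u (Finset.mem_of_mem_erase hu))
          have h2 := fmax_nonneg ((T.children t).erase c) fun u => x u * w u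
          unfold wexcl at h1 ⊢
          linarith
        -- fixed point equation at c
        have he := heq c hcr
        rw [hcp, hwe, hterm c hc] at he
        simp only [max_self, sub_zero, mul_zero] at he
        -- (1 - x c) * w c = 0
        rcases mul_eq_zero.mp he with h | h
        · -- x c = 1, so w c = x c * w c = 0
          have hx1 : x c = 1 := by linarith
          have := hterm c hc
          rw [hx1, one_mul] at this
          linarith
        · linarith
  intro t
  exact key (Fintype.card T.V) t (by omega)

end TreeSharesAux

/-- In any fixed point of the tree bargaining equations, every share is
strictly positive. -/
theorem tree_shares_pos (T : BTree) (v x w : T.V → ℝ)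
    (hv : ∀ l, T.IsLeaf l → 0 < v l) (hroot : ¬ T.IsLeaf T.root)
    (hfp : IsTreeFixedPoint T v x w) :
    ∀ t, t ≠ T.root → 0 < x t := by
  intro t ht
  have hw := TreeSharesAux.w_pos T v x w hv hfp t
  obtain ⟨hvf, hxr, hx01, heq⟩ := hfp
  rcases lt_or_eq_of_le (hx01 t ht).1 with h | h
  · exact h
  exfalso
  have he := heq t ht
  rw [← h, mul_comm (0 : ℝ) (w t), mul_zero] at he
  have hwe : 0 ≤ wexcl T x w (T.parent t) t := TreeSharesAux.fmax_nonneg _ _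
  rw [max_eq_left hwe, sub_self, mul_zero, sub_zero, one_mul] at he
  linarith
end

section
/- In any fixed point of the tree bargaining equations, if x_t = 1 for some non-root node t, then x_u = 1 for every node u that is a descendant of t (that is, the share equals 1 on every edge in the subtree rooted at t). -/
noncomputable def bdepth (T : BTree) (u : T.V) : ℕ := Nat.find (T.reaches_root u)

lemma bdepth_spec (T : BTree) (u : T.V) : T.parent^[bdepth T u] u = T.root :=
  Nat.find_spec (T.reaches_root u)

lemma bdepth_no_shortcut (T : BTree) (u : T.V) {i j : ℕ} (hij : i < j)
    (hj : j ≤ bdepth T u) (h : T.parent^[i] u = T.parent^[j] u) : False := by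
  have hd := bdepth_spec T u
  have hrw : bdepth T u = (bdepth T u - j) + j := by omega
  have : T.parent^[(bdepth T u - j) + i] u = T.root := by
    rw [Function.iterate_add_apply, h, ← Function.iterate_add_apply, ← hrw]
    exact hd
  have hlt : (bdepth T u - j) + i < bdepth T u := by omega
  exact Nat.find_min (T.reaches_root u) hlt this

lemma bdepth_lt_card (T : BTree) (u : T.V) : bdepth T u < Fintype.card T.V := by
  by_contra h
  push_neg at h
  have hinj : Function.Injective (fun k : Fin (bdepth T u + 1) => T.parent^[(k : ℕ)] u) := by
    intro i j hij
    by_contra hne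
    have hne' : (i : ℕ) ≠ (j : ℕ) := fun hc => hne (Fin.ext hc)
    rcases lt_or_gt_of_ne hne' with hlt | hlt
    · exact bdepth_no_shortcut T u hlt (by omega) hij
    · exact bdepth_no_shortcut T u hlt (by omega) hij.symm
  have := Fintype.card_le_of_injective _ hinj
  simp only [Fintype.card_fin] at this
  omega

lemma fmax_nonneg {α : Type*} (F : Finset α) (f : α → ℝ) : 0 ≤ fmax F f :=
  le_csSup ((F.finite_toSet.image f).insert 0).bddAbove (Set.mem_insert 0 _)

lemma le_fmax {α : Type*} {F : Finset α} (f : α → ℝ) {a : α} (ha : a ∈ F) :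
    f a ≤ fmax F f :=
  le_csSup ((F.finite_toSet.image f).insert 0).bddAbove
    (Set.mem_insert_of_mem _ ⟨a, Finset.mem_coe.mpr ha, rfl⟩)

lemma bdepth_child (T : BTree) {u c : T.V} (hcr : c ≠ T.root) (hcp : T.parent c = u) :
    bdepth T u + 1 ≤ bdepth T c := by
  have h0 : bdepth T c ≠ 0 := by
    intro h
    exact hcr (by simpa [h] using bdepth_spec T c)
  have : T.parent^[(bdepth T c - 1)] u = T.root := by
    have := bdepth_spec T c
    rw [show bdepth T c = (bdepth T c - 1) + 1 by omega,
      Function.iterate_succ_apply, hcp] at this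
    exact this
  have := Nat.find_min' (T.reaches_root u) this
  have : bdepth T u ≤ bdepth T c - 1 := this
  omega

lemma w_pos (T : BTree) (v x w : T.V → ℝ)
    (hv : ∀ l, T.IsLeaf l → 0 < v l)
    (hfp : IsTreeFixedPoint T v x w) : ∀ u, 0 < w u := by
  obtain ⟨⟨hleaf, hint⟩, hxr, hx01, heq⟩ := hfp
  suffices H : ∀ n u, Fintype.card T.V ≤ bdepth T u + n → 0 < w u by
    intro u
    exact H (Fintype.card T.V) u (by omega)
  intro n
  induction n with
  | zero =>
    intro u hu
    have := bdepth_lt_card T u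
    omega
  | succ n ih =>
    intro u hu
    by_cases hl : T.IsLeaf u
    · rw [hleaf u hl]; exact hv u hl
    · obtain ⟨c, hc⟩ := Finset.nonempty_iff_ne_empty.mpr hl
      obtain ⟨hcr, hcp⟩ := (Finset.mem_filter.mp hc).2
      have hdc := bdepth_child T hcr hcp
      have hwc : 0 < w c := ih c (by omega)
      have hxc : 0 < x c * w c := by
        rcases le_or_gt (x c * w c) (wexcl T x w u c) with h | h
        · have hEq := heq c hcr
          rw [hcp, max_eq_left h] at hEq
          have h0 : (1 - x c) * w c = 0 := by rw [hEq]; ring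
          have hx1 : x c = 1 := by
            rcases mul_eq_zero.mp h0 with h' | h'
            · linarith
            · linarith
          rw [hx1, one_mul]; exact hwc
        · exact lt_of_le_of_lt (fmax_nonneg _ _) h
      rw [hint u hl]
      exact lt_of_lt_of_le hxc (le_fmax (fun t => x t * w t) hc)

/-- In any fixed point, if `x t = 1` for a non-root node `t`, then `x u = 1`
for every descendant `u` of `t`. -/
theorem tree_shares_one_subtree (T : BTree) (v x w : T.V → ℝ)
    (hv : ∀ l, T.IsLeaf l → 0 < v l) (hroot : ¬ T.IsLeaf T.root)
    (hfp : IsTreeFixedPoint T v x w) :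
    ∀ t, t ≠ T.root → x t = 1 →
      ∀ u, (∃ k : ℕ, T.parent^[k] u = t) → x u = 1 := by
  have hwpos := w_pos T v x w hv hfp
  intro t ht hxt u hu
  obtain ⟨k, hk⟩ := hu
  induction k generalizing u with
  | zero =>
    simp only [Function.iterate_zero, id] at hk
    rw [hk]; exact hxt
  | succ k ih =>
    have hur : u ≠ T.root := by
      rintro rfl
      apply ht
      rw [← hk, Function.iterate_fixed T.parent_root]
    have hp : x (T.parent u) = 1 := by
      apply ih
      rwa [Function.iterate_succ_apply] at hk
    have he := hfp.2.2.2 u hur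
    rw [hp] at he
    simp only [sub_self, zero_mul] at he
    have hw := hwpos u
    rcases mul_eq_zero.mp he with h' | h'
    · linarith
    · linarith
end
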